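/- arXiv:1405.7565 — 4 statements merged into one kernel-verified Lean document; each statement's English description precedes it below -/
import Mathlib

section
/- Let u₀ ∈ H^s(ℝⁿ), s > 0. If the decay character r*(u₀) satisfies -n/2 < r*(u₀) < ∞, then the decay character of Λ^s u₀ satisfies -n/2 + s < r*_s(u₀) < ∞ and r*_s(u₀) = s + r*(u₀). -/
open MeasureTheory Filter Metric
open scoped FourierTransform Topology

/-- The decay indicator `ρ ↦ ρ^{-2r-n} ∫_{B(ρ)} |ξ|^{2s}|û₀(ξ)|² dξ`. -/
noncomputable def decayIndicator (n : ℕ) (u₀ : EuclideanSpace ℝ (Fin n) → ℂ)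
    (s r ρ : ℝ) : ℝ :=
  ρ ^ (-2 * r - n) *
    ∫ ξ in ball (0 : EuclideanSpace ℝ (Fin n)) ρ, ‖ξ‖ ^ (2 * s) * ‖𝓕 u₀ ξ‖ ^ 2

/-- `Λ^s u₀` has (finite) decay character `r`: `r ∈ (-n/2 + s, ∞)` and
`P_r^s(u₀) = lim_{ρ→0⁺}` of the decay indicator exists with `0 < P_r^s(u₀) < ∞`. -/
def HasDecayCharacter (n : ℕ) (u₀ : EuclideanSpace ℝ (Fin n) → ℂ) (s r : ℝ) : Prop :=
  -(n : ℝ) / 2 + s < r ∧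
    ∃ P : ℝ, 0 < P ∧
      Filter.Tendsto (decayIndicator n u₀ s r) (nhdsWithin 0 (Set.Ioi 0)) (nhds P)

open scoped ENNReal

lemma dcs_intOn_rpow {c : ℝ} (hc : -1 < c) (ρ : ℝ) :
    IntegrableOn (fun t : ℝ => t ^ c) (Set.Ioo 0 ρ) := by
  exact ((intervalIntegral.intervalIntegrable_rpow' hc (a := 0) (b := ρ)).1).mono_set
    Set.Ioo_subset_Ioc_self

lemma dcs_int_rpow {c : ℝ} (hc : -1 < c) {ρ : ℝ} (hρ : 0 ≤ ρ) :
    ∫ t in Set.Ioo (0:ℝ) ρ, t ^ c = ρ ^ (c+1) / (c+1) := by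
  rw [← integral_Ioc_eq_integral_Ioo, ← intervalIntegral.integral_of_le hρ,
    integral_rpow (Or.inl hc), Real.zero_rpow (by linarith), sub_zero]

lemma dcs_ofReal_rpow {β : ℝ} (hβ : 0 < β) {x : ℝ} (hx : 0 ≤ x) :
    ENNReal.ofReal (x ^ β) = ∫⁻ t in Set.Ioc (0:ℝ) x, ENNReal.ofReal (β * t ^ (β-1)) := by
  rw [← MeasureTheory.ofReal_integral_eq_lintegral_ofReal]
  · congr 1
    have hb : β - 1 + 1 = β := by ring
    rw [← intervalIntegral.integral_of_le hx, intervalIntegral.integral_const_mul,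
      integral_rpow (Or.inl (by linarith)), hb, Real.zero_rpow (ne_of_gt hβ), sub_zero]
    field_simp
  · exact ((intervalIntegral.intervalIntegrable_rpow' (by linarith) (a := 0) (b := x)).1).const_mul β
  · filter_upwards [ae_restrict_mem measurableSet_Ioc] with t ht
    exact mul_nonneg hβ.le (Real.rpow_nonneg ht.1.le _)

lemma dcs_key_identity (n : ℕ) (g : EuclideanSpace ℝ (Fin n) → ℝ) (hg : ∀ ξ, 0 ≤ g ξ)
    (hgm : Measurable g) {β : ℝ} (hβ : 0 < β) {ρ : ℝ} (hρ : 0 < ρ)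
    (hint : IntegrableOn g (ball (0 : EuclideanSpace ℝ (Fin n)) ρ))
    (hint2 : IntegrableOn (fun ξ => ‖ξ‖ ^ β * g ξ) (ball (0 : EuclideanSpace ℝ (Fin n)) ρ)) :
    ∫ ξ in ball (0 : EuclideanSpace ℝ (Fin n)) ρ, ‖ξ‖ ^ β * g ξ
      = ∫ t in Set.Ioo (0:ℝ) ρ,
          β * t ^ (β-1) * ∫ ξ in ball (0 : EuclideanSpace ℝ (Fin n)) ρ \ ball 0 t, g ξ := by
  set f : EuclideanSpace ℝ (Fin n) → ℝ → ℝ≥0∞ := fun ξ t =>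
    (Set.Ioc (0:ℝ) ‖ξ‖).indicator (fun u => ENNReal.ofReal (β * u ^ (β-1))) t
      * ENNReal.ofReal (g ξ) with hf_def
  have hDnn : ∀ t : ℝ, 0 ≤ ∫ ξ in ball (0 : EuclideanSpace ℝ (Fin n)) ρ \ ball 0 t, g ξ :=
    fun t => setIntegral_nonneg (measurableSet_ball.diff measurableSet_ball)
      (fun ξ _ => hg ξ)
  have h1 : ENNReal.ofReal (∫ ξ in ball (0 : EuclideanSpace ℝ (Fin n)) ρ, ‖ξ‖ ^ β * g ξ)
      = ∫⁻ ξ in ball (0 : EuclideanSpace ℝ (Fin n)) ρ, ENNReal.ofReal (‖ξ‖ ^ β * g ξ) :=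
    ofReal_integral_eq_lintegral_ofReal hint2
      (ae_of_all _ fun ξ => mul_nonneg (Real.rpow_nonneg (norm_nonneg _) _) (hg ξ))
  have h2 : ∀ ξ : EuclideanSpace ℝ (Fin n),
      ENNReal.ofReal (‖ξ‖ ^ β * g ξ) = ∫⁻ t in Set.Ioi (0:ℝ), f ξ t := by
    intro ξ
    rw [ENNReal.ofReal_mul (Real.rpow_nonneg (norm_nonneg _) _),
      dcs_ofReal_rpow hβ (norm_nonneg ξ)]
    rw [hf_def]
    rw [lintegral_mul_const' _ _ ENNReal.ofReal_ne_top,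
      lintegral_indicator measurableSet_Ioc, Measure.restrict_restrict measurableSet_Ioc,
      Set.inter_eq_left.mpr Set.Ioc_subset_Ioi_self]
  have hf_meas : AEMeasurable (Function.uncurry f)
      ((volume.restrict (ball (0 : EuclideanSpace ℝ (Fin n)) ρ)).prod
        (volume.restrict (Set.Ioi (0:ℝ)))) := by
    have heq : Function.uncurry f = fun p : EuclideanSpace ℝ (Fin n) × ℝ =>
        ({q : EuclideanSpace ℝ (Fin n) × ℝ | 0 < q.2 ∧ q.2 ≤ ‖q.1‖}.indicator
          (fun q => ENNReal.ofReal (β * q.2 ^ (β-1))) p) * ENNReal.ofReal (g p.1) := by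
      ext p
      simp only [Function.uncurry, hf_def]
      simp only [Set.indicator_apply, Set.mem_Ioc, Set.mem_setOf_eq]
    rw [heq]
    have hS : MeasurableSet {q : EuclideanSpace ℝ (Fin n) × ℝ | 0 < q.2 ∧ q.2 ≤ ‖q.1‖} := by
      have hSeq : {q : EuclideanSpace ℝ (Fin n) × ℝ | 0 < q.2 ∧ q.2 ≤ ‖q.1‖}
          = {q : EuclideanSpace ℝ (Fin n) × ℝ | 0 < q.2}
            ∩ {q : EuclideanSpace ℝ (Fin n) × ℝ | q.2 ≤ ‖q.1‖} := rfl
      rw [hSeq]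
      exact (measurableSet_lt measurable_const measurable_snd).inter
        (measurableSet_le measurable_snd measurable_fst.norm)
    refine Measurable.aemeasurable (Measurable.mul ?_ ((hgm.comp measurable_fst).ennreal_ofReal))
    refine Measurable.indicator ?_ hS
    have : Measurable fun q : EuclideanSpace ℝ (Fin n) × ℝ => β * q.2 ^ (β-1) := by fun_prop
    exact this.ennreal_ofReal
  have h3 : ∀ t ∈ Set.Ioi (0:ℝ),
      (∫⁻ ξ in ball (0 : EuclideanSpace ℝ (Fin n)) ρ, f ξ t)
        = ENNReal.ofReal (β * t ^ (β-1))
          * ENNReal.ofReal (∫ ξ in ball (0 : EuclideanSpace ℝ (Fin n)) ρ \ ball 0 t, g ξ) := by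
    intro t ht
    have hset : MeasurableSet {ξ : EuclideanSpace ℝ (Fin n) | t ≤ ‖ξ‖} :=
      measurableSet_le measurable_const measurable_norm
    have heq : ∀ ξ : EuclideanSpace ℝ (Fin n), f ξ t
        = {ξ : EuclideanSpace ℝ (Fin n) | t ≤ ‖ξ‖}.indicator
            (fun ξ => ENNReal.ofReal (β * t ^ (β-1)) * ENNReal.ofReal (g ξ)) ξ := by
      intro ξ
      have ht' : (0:ℝ) < t := ht
      rw [hf_def]
      simp only [Set.indicator_apply, Set.mem_Ioc, Set.mem_setOf_eq]
      split_ifs <;> simp_all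
    rw [lintegral_congr heq, lintegral_indicator hset, Measure.restrict_restrict hset]
    have hsets : {ξ : EuclideanSpace ℝ (Fin n) | t ≤ ‖ξ‖} ∩ ball 0 ρ = ball 0 ρ \ ball 0 t := by
      ext ξ; simp [mem_ball_zero_iff, not_lt, and_comm]
    rw [hsets, lintegral_const_mul' _ _ ENNReal.ofReal_ne_top]
    congr 1
    exact (ofReal_integral_eq_lintegral_ofReal (hint.mono_set Set.diff_subset)
      (ae_of_all _ fun ξ => hg ξ)).symm
  have h4 : (∫⁻ t in Set.Ioi (0:ℝ), ∫⁻ ξ in ball (0 : EuclideanSpace ℝ (Fin n)) ρ, f ξ t)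
      = ∫⁻ t in Set.Ioo (0:ℝ) ρ, ENNReal.ofReal
          (β * t ^ (β-1) * ∫ ξ in ball (0 : EuclideanSpace ℝ (Fin n)) ρ \ ball 0 t, g ξ) := by
    rw [setLIntegral_congr_fun measurableSet_Ioi h3]
    rw [← Set.Ioo_union_Ici_eq_Ioi hρ,
      lintegral_union measurableSet_Ici
        (Set.disjoint_left.mpr fun a ha hb => absurd (Set.mem_Ici.mp hb) (not_le.mpr ha.2))]
    have hz : (∫⁻ t in Set.Ici ρ, ENNReal.ofReal (β * t ^ (β-1))
        * ENNReal.ofReal (∫ ξ in ball (0 : EuclideanSpace ℝ (Fin n)) ρ \ ball 0 t, g ξ)) = 0 := by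
      rw [setLIntegral_congr_fun measurableSet_Ici (fun t ht => ?_), lintegral_zero]
      have hemp : ball (0 : EuclideanSpace ℝ (Fin n)) ρ \ ball 0 t = ∅ :=
        Set.diff_eq_empty.mpr (ball_subset_ball ht)
      rw [hemp]
      simp
    rw [hz, add_zero]
    refine setLIntegral_congr_fun measurableSet_Ioo (fun t ht => ?_)
    rw [← ENNReal.ofReal_mul (mul_nonneg hβ.le (Real.rpow_nonneg ht.1.le _))]
  have hanti : AntitoneOn (fun t : ℝ =>
      ∫ ξ in ball (0 : EuclideanSpace ℝ (Fin n)) ρ \ ball 0 t, g ξ) (Set.Ioo 0 ρ) := by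
    intro a _ b _ hab
    exact setIntegral_mono_set (hint.mono_set Set.diff_subset) (ae_of_all _ fun ξ => hg ξ)
      (HasSubset.Subset.eventuallyLE (Set.diff_subset_diff_right (ball_subset_ball hab)))
  have hmidmeas : AEStronglyMeasurable (fun t : ℝ => β * t ^ (β-1)
      * ∫ ξ in ball (0 : EuclideanSpace ℝ (Fin n)) ρ \ ball 0 t, g ξ)
      (volume.restrict (Set.Ioo (0:ℝ) ρ)) := by
    have hm1 : Measurable fun t : ℝ => β * t ^ (β-1) := by fun_prop
    exact (hm1.aemeasurable.mul
      (aemeasurable_restrict_of_antitoneOn measurableSet_Ioo hanti)).aestronglyMeasurable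
  have h6 : ∫ t in Set.Ioo (0:ℝ) ρ, β * t ^ (β-1)
      * ∫ ξ in ball (0 : EuclideanSpace ℝ (Fin n)) ρ \ ball 0 t, g ξ
      = (∫⁻ t in Set.Ioo (0:ℝ) ρ, ENNReal.ofReal
          (β * t ^ (β-1) * ∫ ξ in ball (0 : EuclideanSpace ℝ (Fin n)) ρ \ ball 0 t, g ξ)).toReal := by
    refine integral_eq_lintegral_of_nonneg_ae ?_ hmidmeas
    filter_upwards [ae_restrict_mem measurableSet_Ioo] with t ht
    exact mul_nonneg (mul_nonneg hβ.le (Real.rpow_nonneg ht.1.le _)) (hDnn t)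
  have hLnn : 0 ≤ ∫ ξ in ball (0 : EuclideanSpace ℝ (Fin n)) ρ, ‖ξ‖ ^ β * g ξ :=
    setIntegral_nonneg measurableSet_ball
      (fun ξ _ => mul_nonneg (Real.rpow_nonneg (norm_nonneg _) _) (hg ξ))
  calc ∫ ξ in ball (0 : EuclideanSpace ℝ (Fin n)) ρ, ‖ξ‖ ^ β * g ξ
      = (ENNReal.ofReal (∫ ξ in ball (0 : EuclideanSpace ℝ (Fin n)) ρ, ‖ξ‖ ^ β * g ξ)).toReal :=
        (ENNReal.toReal_ofReal hLnn).symm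
    _ = (∫⁻ t in Set.Ioo (0:ℝ) ρ, ENNReal.ofReal
          (β * t ^ (β-1) * ∫ ξ in ball (0 : EuclideanSpace ℝ (Fin n)) ρ \ ball 0 t, g ξ)).toReal := by
        rw [h1, lintegral_congr h2, lintegral_lintegral_swap hf_meas, h4]
    _ = _ := h6.symm

lemma dcs_main (n : ℕ) (g : EuclideanSpace ℝ (Fin n) → ℝ) (hg0 : ∀ ξ, 0 ≤ g ξ)
    (hgm : Measurable g) {α β : ℝ} (hα : 0 < α) (hβ : 0 < β)
    (hint2 : Integrable (fun ξ : EuclideanSpace ℝ (Fin n) => ‖ξ‖ ^ β * g ξ))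
    {P : ℝ} (hP : 0 < P)
    (htendF : Tendsto
      (fun t : ℝ => t ^ (-α) * ∫ ξ in ball (0 : EuclideanSpace ℝ (Fin n)) t, g ξ)
      (𝓝[>] 0) (𝓝 P)) :
    Tendsto
      (fun ρ : ℝ => ρ ^ (-(α+β)) * ∫ ξ in ball (0 : EuclideanSpace ℝ (Fin n)) ρ, ‖ξ‖ ^ β * g ξ)
      (𝓝[>] 0) (𝓝 (P * α / (α+β))) := by
  by_cases hcase : ∃ ρ₀ > (0:ℝ), IntegrableOn g (ball (0 : EuclideanSpace ℝ (Fin n)) ρ₀)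
  swap
  · exfalso
    push_neg at hcase
    have hF0 : ∀ t : ℝ, 0 < t → (∫ ξ in ball (0 : EuclideanSpace ℝ (Fin n)) t, g ξ) = 0 :=
      fun t ht => integral_undef (hcase t ht)
    have hev : (fun t : ℝ => t ^ (-α) * ∫ ξ in ball (0 : EuclideanSpace ℝ (Fin n)) t, g ξ)
        =ᶠ[𝓝[>] (0:ℝ)] fun _ => (0:ℝ) := by
      filter_upwards [self_mem_nhdsWithin] with t ht
      rw [hF0 t ht, mul_zero]
    have h0 : Tendsto (fun _ : ℝ => (0:ℝ)) (𝓝[>] (0:ℝ)) (𝓝 P) := Filter.Tendsto.congr' hev htendF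
    have := tendsto_nhds_unique h0 tendsto_const_nhds
    linarith
  obtain ⟨ρ₀, hρ₀, hgint⟩ := hcase
  set F : ℝ → ℝ := fun t => ∫ ξ in ball (0 : EuclideanSpace ℝ (Fin n)) t, g ξ with hF_def
  rw [Metric.tendsto_nhdsWithin_nhds] at htendF ⊢
  intro ε hε
  obtain ⟨δ₁, hδ₁, hδ⟩ := htendF (ε/2) (by linarith)
  refine ⟨min δ₁ ρ₀, lt_min hδ₁ hρ₀, ?_⟩
  intro ρ hρmem hρdist
  have hρpos : (0:ℝ) < ρ := hρmem
  rw [Real.dist_eq, sub_zero, abs_of_pos hρpos] at hρdist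
  have hρρ₀ : ρ ≤ ρ₀ := (lt_of_lt_of_le hρdist (min_le_right _ _)).le
  have hρδ₁ : ρ < δ₁ := lt_of_lt_of_le hρdist (min_le_left _ _)
  have hFbound : ∀ t : ℝ, 0 < t → t < δ₁ →
      (P - ε/2) * t ^ α < F t ∧ F t < (P + ε/2) * t ^ α := by
    intro t ht htδ
    have h1 := hδ (Set.mem_Ioi.mpr ht) (by rw [Real.dist_eq, sub_zero, abs_of_pos ht]; exact htδ)
    rw [Real.dist_eq, abs_lt] at h1
    have htα : (0:ℝ) < t ^ α := Real.rpow_pos_of_pos ht α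
    have hkey : t ^ (-α) * F t * t ^ α = F t := by
      rw [Real.rpow_neg ht.le]
      field_simp
    constructor
    · nlinarith [h1.1, mul_lt_mul_of_pos_right h1.1 htα]
    · nlinarith [h1.2, mul_lt_mul_of_pos_right h1.2 htα]
  have hFρ := hFbound ρ hρpos hρδ₁
  have hintρ : IntegrableOn g (ball (0 : EuclideanSpace ℝ (Fin n)) ρ) :=
    hgint.mono_set (ball_subset_ball hρρ₀)
  have hid := dcs_key_identity n g hg0 hgm hβ hρpos hintρ hint2.integrableOn
  have hDeq : ∀ t ∈ Set.Ioo (0:ℝ) ρ,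
      (∫ ξ in ball (0 : EuclideanSpace ℝ (Fin n)) ρ \ ball 0 t, g ξ) = F ρ - F t := by
    intro t ht
    rw [integral_diff measurableSet_ball hintρ (ball_subset_ball ht.2.le)]
  have hmain : (∫ ξ in ball (0 : EuclideanSpace ℝ (Fin n)) ρ, ‖ξ‖ ^ β * g ξ)
      = ∫ t in Set.Ioo (0:ℝ) ρ, β * t ^ (β-1) * (F ρ - F t) := by
    rw [hid]
    exact setIntegral_congr_fun measurableSet_Ioo (fun t ht => by rw [hDeq t ht])
  have hi1 : IntegrableOn (fun t : ℝ => t ^ (β-1)) (Set.Ioo 0 ρ) :=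
    dcs_intOn_rpow (by linarith) ρ
  have hi2 : IntegrableOn (fun t : ℝ => t ^ (α+β-1)) (Set.Ioo 0 ρ) :=
    dcs_intOn_rpow (by linarith) ρ
  have hIβ : ∫ t in Set.Ioo (0:ℝ) ρ, t ^ (β-1) = ρ ^ β / β := by
    rw [dcs_int_rpow (by linarith) hρpos.le, show β-1+1 = β from by ring]
  have hIαβ : ∫ t in Set.Ioo (0:ℝ) ρ, t ^ (α+β-1) = ρ ^ (α+β) / (α+β) := by
    rw [dcs_int_rpow (by linarith) hρpos.le, show α+β-1+1 = α+β from by ring]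
  set c₁ := P + ε/2 with hc₁
  set c₂ := P - ε/2 with hc₂
  have hHighInt : IntegrableOn
      (fun t : ℝ => (β * c₁ * ρ ^ α) * t ^ (β-1) - (β * c₂) * t ^ (α+β-1)) (Set.Ioo 0 ρ) :=
    (hi1.const_mul _).sub (hi2.const_mul _)
  have hLowInt : IntegrableOn
      (fun t : ℝ => (β * c₂ * ρ ^ α) * t ^ (β-1) - (β * c₁) * t ^ (α+β-1)) (Set.Ioo 0 ρ) :=
    (hi1.const_mul _).sub (hi2.const_mul _)
  have hub : ∀ t ∈ Set.Ioo (0:ℝ) ρ, β * t ^ (β-1) * (F ρ - F t)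
      ≤ (β * c₁ * ρ ^ α) * t ^ (β-1) - (β * c₂) * t ^ (α+β-1) := by
    intro t ht
    have hFt := hFbound t ht.1 (ht.2.trans hρδ₁)
    have htβ : (0:ℝ) < t ^ (β-1) := Real.rpow_pos_of_pos ht.1 _
    have hsplit : t ^ (α+β-1) = t ^ α * t ^ (β-1) := by
      rw [show α+β-1 = α + (β-1) from by ring, Real.rpow_add ht.1]
    rw [hsplit]
    have k1 : (0:ℝ) < β * t ^ (β-1) := mul_pos hβ htβ
    have k2 : F ρ - F t ≤ c₁ * ρ ^ α - c₂ * t ^ α := by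
      have := hFρ.2
      have := hFt.1
      linarith
    calc β * t ^ (β-1) * (F ρ - F t) ≤ β * t ^ (β-1) * (c₁ * ρ ^ α - c₂ * t ^ α) :=
          mul_le_mul_of_nonneg_left k2 k1.le
      _ = (β * c₁ * ρ ^ α) * t ^ (β-1) - (β * c₂) * (t ^ α * t ^ (β-1)) := by ring
  have hlb : ∀ t ∈ Set.Ioo (0:ℝ) ρ, (β * c₂ * ρ ^ α) * t ^ (β-1) - (β * c₁) * t ^ (α+β-1)
      ≤ β * t ^ (β-1) * (F ρ - F t) := by
    intro t ht
    have hFt := hFbound t ht.1 (ht.2.trans hρδ₁)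
    have htβ : (0:ℝ) < t ^ (β-1) := Real.rpow_pos_of_pos ht.1 _
    have hsplit : t ^ (α+β-1) = t ^ α * t ^ (β-1) := by
      rw [show α+β-1 = α + (β-1) from by ring, Real.rpow_add ht.1]
    rw [hsplit]
    have k1 : (0:ℝ) < β * t ^ (β-1) := mul_pos hβ htβ
    have k2 : c₂ * ρ ^ α - c₁ * t ^ α ≤ F ρ - F t := by
      have := hFρ.1
      have := hFt.2
      linarith
    calc (β * c₂ * ρ ^ α) * t ^ (β-1) - (β * c₁) * (t ^ α * t ^ (β-1))
        = β * t ^ (β-1) * (c₂ * ρ ^ α - c₁ * t ^ α) := by ring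
      _ ≤ β * t ^ (β-1) * (F ρ - F t) := mul_le_mul_of_nonneg_left k2 k1.le
  have hFmono : MonotoneOn F (Set.Ioc 0 ρ) := by
    intro a ha b hb hab
    exact setIntegral_mono_set (hgint.mono_set (ball_subset_ball (hb.2.trans hρρ₀)))
      (ae_of_all _ hg0) (HasSubset.Subset.eventuallyLE (ball_subset_ball hab))
  have hmidmeas : AEStronglyMeasurable (fun t : ℝ => β * t ^ (β-1) * (F ρ - F t))
      (volume.restrict (Set.Ioo (0:ℝ) ρ)) := by
    have hm1 : Measurable fun t : ℝ => β * t ^ (β-1) := by fun_prop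
    have hFm : AEMeasurable F (volume.restrict (Set.Ioo (0:ℝ) ρ)) :=
      aemeasurable_restrict_of_monotoneOn measurableSet_Ioo
        (hFmono.mono Set.Ioo_subset_Ioc_self)
    exact (hm1.aemeasurable.mul (aemeasurable_const.sub hFm)).aestronglyMeasurable
  have hmidint : IntegrableOn (fun t : ℝ => β * t ^ (β-1) * (F ρ - F t)) (Set.Ioo 0 ρ) := by
    refine Integrable.mono' hHighInt hmidmeas ?_
    filter_upwards [ae_restrict_mem measurableSet_Ioo] with t ht
    have hFle : F t ≤ F ρ := hFmono (Set.mem_Ioc.mpr ⟨ht.1, ht.2.le⟩)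
      (Set.mem_Ioc.mpr ⟨hρpos, le_refl ρ⟩) ht.2.le
    have h0 : 0 ≤ β * t ^ (β-1) * (F ρ - F t) :=
      mul_nonneg (mul_nonneg hβ.le (Real.rpow_nonneg ht.1.le _)) (by linarith)
    rw [Real.norm_eq_abs, abs_of_nonneg h0]
    exact hub t ht
  have hup := setIntegral_mono_on hmidint hHighInt measurableSet_Ioo hub
  have hlow := setIntegral_mono_on hLowInt hmidint measurableSet_Ioo hlb
  have hrw : ρ ^ (α+β) = ρ ^ α * ρ ^ β := Real.rpow_add hρpos α β
  have hHighVal : ∫ t in Set.Ioo (0:ℝ) ρ,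
      ((β * c₁ * ρ ^ α) * t ^ (β-1) - (β * c₂) * t ^ (α+β-1))
      = c₁ * ρ ^ (α+β) - c₂ * (β/(α+β)) * ρ ^ (α+β) := by
    rw [integral_sub (hi1.const_mul _) (hi2.const_mul _), integral_const_mul, integral_const_mul,
      hIβ, hIαβ, hrw]
    field_simp
  have hLowVal : ∫ t in Set.Ioo (0:ℝ) ρ,
      ((β * c₂ * ρ ^ α) * t ^ (β-1) - (β * c₁) * t ^ (α+β-1))
      = c₂ * ρ ^ (α+β) - c₁ * (β/(α+β)) * ρ ^ (α+β) := by
    rw [integral_sub (hi1.const_mul _) (hi2.const_mul _), integral_const_mul, integral_const_mul,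
      hIβ, hIαβ, hrw]
    field_simp
  have hupos : (0:ℝ) < ρ ^ (-(α+β)) := Real.rpow_pos_of_pos hρpos _
  have huv : ρ ^ (-(α+β)) * ρ ^ (α+β) = 1 := by
    rw [← Real.rpow_add hρpos, show -(α+β)+(α+β) = (0:ℝ) from by ring, Real.rpow_zero]
  rw [hmain, Real.dist_eq, abs_lt]
  have hq1 : β/(α+β) < 1 := (div_lt_one (by linarith)).mpr (by linarith)
  have hq0 : (0:ℝ) < β/(α+β) := by positivity
  have hBU : ρ ^ (-(α+β)) * (∫ t in Set.Ioo (0:ℝ) ρ, β * t ^ (β-1) * (F ρ - F t))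
      ≤ c₁ - c₂ * (β/(α+β)) := by
    calc ρ ^ (-(α+β)) * (∫ t in Set.Ioo (0:ℝ) ρ, β * t ^ (β-1) * (F ρ - F t))
        ≤ ρ ^ (-(α+β)) * ∫ t in Set.Ioo (0:ℝ) ρ,
            ((β * c₁ * ρ ^ α) * t ^ (β-1) - (β * c₂) * t ^ (α+β-1)) :=
          mul_le_mul_of_nonneg_left hup hupos.le
      _ = c₁ - c₂ * (β/(α+β)) := by
          rw [hHighVal]
          linear_combination (c₁ - c₂ * (β/(α+β))) * huv
  have hBL : c₂ - c₁ * (β/(α+β))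
      ≤ ρ ^ (-(α+β)) * (∫ t in Set.Ioo (0:ℝ) ρ, β * t ^ (β-1) * (F ρ - F t)) := by
    calc c₂ - c₁ * (β/(α+β))
        = ρ ^ (-(α+β)) * ∫ t in Set.Ioo (0:ℝ) ρ,
            ((β * c₂ * ρ ^ α) * t ^ (β-1) - (β * c₁) * t ^ (α+β-1)) := by
          rw [hLowVal]
          linear_combination (-(c₂ - c₁ * (β/(α+β)))) * huv
      _ ≤ _ := mul_le_mul_of_nonneg_left hlow hupos.le
  have hPα : P * α / (α+β) = P - P * (β/(α+β)) := by
    field_simp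
    ring
  have hq2 : (ε/2) * (β/(α+β)) < ε/2 * 1 := mul_lt_mul_of_pos_left hq1 (by linarith)
  have e1 : c₁ * (β/(α+β)) = P * (β/(α+β)) + (ε/2) * (β/(α+β)) := by rw [hc₁]; ring
  have e2 : c₂ * (β/(α+β)) = P * (β/(α+β)) - (ε/2) * (β/(α+β)) := by rw [hc₂]; ring
  constructor
  · rw [hPα]
    rw [hc₂] at hBL
    linarith [hBL, hq2, e1]
  · rw [hPα]
    rw [hc₁] at hBU
    linarith [hBU, hq2, e2]

/-- For `u₀ ∈ H^s(ℝⁿ)`, `s > 0`: if the decay character `r*(u₀)` satisfies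
`-n/2 < r*(u₀) < ∞` then the decay character of `Λ^s u₀` satisfies
`-n/2 + s < r*_s(u₀) < ∞` and `r*_s(u₀) = s + r*(u₀)`. -/
theorem decay_character_shift
    (n : ℕ) (s : ℝ) (hs : 0 < s)
    (u₀ : EuclideanSpace ℝ (Fin n) → ℂ)
    (hu₀ : MemLp u₀ 2)
    (hHs : Integrable (fun ξ : EuclideanSpace ℝ (Fin n) => ‖ξ‖ ^ (2 * s) * ‖𝓕 u₀ ξ‖ ^ 2))
    (r : ℝ) (hr : -(n : ℝ) / 2 < r)
    (hchar : HasDecayCharacter n u₀ 0 r) :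
    HasDecayCharacter n u₀ s (s + r) := by
  obtain ⟨hr0, P, hP, htend⟩ := hchar
  have hα : (0:ℝ) < 2*r + n := by
    have : -(n:ℝ)/2 < r := hr
    linarith
  have hβ : (0:ℝ) < 2*s := by linarith
  have hgm : Measurable fun ξ : EuclideanSpace ℝ (Fin n) => ‖𝓕 u₀ ξ‖ ^ 2 := by
    by_cases hI : Integrable u₀ (volume : Measure (EuclideanSpace ℝ (Fin n)))
    · have hc : Continuous (𝓕 u₀) :=
        VectorFourier.fourierIntegral_continuous Real.continuous_fourierChar
          (by exact continuous_inner) hI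
      exact (hc.norm.pow 2).measurable
    · have h0 : ∀ w, 𝓕 u₀ w = 0 := by
        intro w
        rw [Real.fourier_eq]
        exact integral_undef (fun hc => hI ((Real.fourierIntegral_convergent_iff w).mp hc))
      simp only [h0]
      simp
  constructor
  · linarith
  refine ⟨P * (2*r+n) / ((2*r+n) + 2*s), by positivity, ?_⟩
  have htendF : Tendsto
      (fun t : ℝ => t ^ (-(2*r+(n:ℝ))) *
        ∫ ξ in ball (0 : EuclideanSpace ℝ (Fin n)) t, ‖𝓕 u₀ ξ‖ ^ 2)
      (𝓝[>] 0) (𝓝 P) := by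
    apply htend.congr
    intro t
    simp only [decayIndicator, mul_zero, Real.rpow_zero, one_mul]
    congr 1
    congr 1
    ring
  have hmain := dcs_main n (fun ξ => ‖𝓕 u₀ ξ‖ ^ 2) (fun ξ => by positivity) hgm hα hβ
    hHs hP htendF
  apply hmain.congr
  intro ρ
  simp only [decayIndicator]
  congr 2
  ring
end

section
/- Lower bound for linear decay: let v₀ ∈ L²(ℝⁿ) with P_{r}(v₀) > 0 for some r > -n/2 (i.e., there exist ρ₀, C₁ > 0 with C₁ ≤ ρ^{-2r-n} ∫_{B(ρ)} |v̂₀|² dξ for 0 < ρ ≤ ρ₀). Let v(t) have Fourier transform v̂(ξ,t) = e^{tM(ξ)} v̂₀(ξ) where |e^{tM(ξ)}w| ≥ C e^{-c|ξ|^{2α}t}|w|, 0 < α ≤ 1. Then there exists C' > 0 such that ‖v(t)‖²_{L²} ≥ C' (1+t)^{-(n/2 + r)/α} for all t ≥ 0. -/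
open MeasureTheory Filter Metric
open scoped Topology

/-- Lower bound for linear decay. If `v₀ ∈ L²(ℝⁿ)` has `P_r(v₀) > 0` for some
`r > -n/2` (there are `ρ₀, C₁ > 0` with `C₁ ≤ ρ^{-2r-n} ∫_{B(ρ)} |v̂₀|² dξ` for `0 < ρ ≤ ρ₀`),
and `v̂(ξ,t) = e^{tM(ξ)} v̂₀(ξ)` satisfies `|v̂(ξ,t)| ≥ C e^{-c|ξ|^{2α}t}|v̂₀(ξ)|` with
`0 < α ≤ 1`, then there is `C' > 0` with
`‖v(t)‖²_{L²} = ∫ |v̂(ξ,t)|² dξ ≥ C'(1+t)^{-(n/2+r)/α}` for all `t ≥ 0`. -/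
theorem linear_decay_lower_bound
    (n : ℕ) (α c C r : ℝ) (hα : 0 < α) (hα1 : α ≤ 1) (hc : 0 < c) (hC : 0 < C)
    (hr : -(n : ℝ) / 2 < r)
    (v₀hat : EuclideanSpace ℝ (Fin n) → EuclideanSpace ℝ (Fin n))
    (hv₀ : MemLp v₀hat 2)
    (ρ₀ C₁ : ℝ) (hρ₀ : 0 < ρ₀) (hC₁ : 0 < C₁)
    (hlow : ∀ ρ : ℝ, 0 < ρ → ρ ≤ ρ₀ →
      C₁ ≤ ρ ^ (-2 * r - n) *
        ∫ ξ in ball (0 : EuclideanSpace ℝ (Fin n)) ρ, ‖v₀hat ξ‖ ^ 2)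
    (Fhat : ℝ → EuclideanSpace ℝ (Fin n) → EuclideanSpace ℝ (Fin n))
    (hsg : ∀ t : ℝ, 0 ≤ t → ∀ ξ : EuclideanSpace ℝ (Fin n),
      C * Real.exp (-c * ‖ξ‖ ^ (2 * α) * t) * ‖v₀hat ξ‖ ≤ ‖Fhat t ξ‖)
    (hL2 : ∀ t : ℝ, 0 ≤ t → Integrable (fun ξ : EuclideanSpace ℝ (Fin n) => ‖Fhat t ξ‖ ^ 2)) :
    ∃ C' : ℝ, 0 < C' ∧ ∀ t : ℝ, 0 ≤ t →
      C' * (1 + t) ^ (-((n : ℝ) / 2 + r) / α) ≤ ∫ ξ, ‖Fhat t ξ‖ ^ 2 := by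
  have h2α : (0:ℝ) < 2 * α := by linarith
  have hv₀int : Integrable (fun ξ : EuclideanSpace ℝ (Fin n) => ‖v₀hat ξ‖ ^ 2) := by
    have := hv₀.integrable_norm_rpow (by norm_num) (by norm_num)
    simpa [ENNReal.toReal_ofNat, Real.rpow_natCast] using this
  set K : ℝ := (C * Real.exp (-(c * ρ₀ ^ (2*α)))) ^ 2 with hK
  have hKpos : 0 < K := by positivity
  refine ⟨K * C₁ * ρ₀ ^ (2*r + n), by positivity, fun t ht => ?_⟩
  have h1t : (0:ℝ) < 1 + t := by linarith
  set s : ℝ := (1 + t) ^ (-(1 / (2*α))) with hs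
  have hspos : 0 < s := Real.rpow_pos_of_pos h1t _
  have hs1 : s ≤ 1 :=
    Real.rpow_le_one_of_one_le_of_nonpos (by linarith) (neg_nonpos.mpr (by positivity))
  set ρ : ℝ := ρ₀ * s with hρdef
  have hρpos : 0 < ρ := mul_pos hρ₀ hspos
  have hρle : ρ ≤ ρ₀ := by nlinarith
  -- key exponent computation: s ^ (2α) = (1+t)⁻¹
  have hs2α : s ^ (2*α) = (1 + t)⁻¹ := by
    rw [hs, ← Real.rpow_mul h1t.le]
    have : -(1 / (2*α)) * (2*α) = -1 := by field_simp
    rw [this, Real.rpow_neg_one]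
  have hρ2α : ρ ^ (2*α) * t ≤ ρ₀ ^ (2*α) := by
    rw [hρdef, Real.mul_rpow hρ₀.le hspos.le, hs2α]
    have h1 : (1 + t)⁻¹ * t ≤ 1 := by
      rw [inv_mul_le_iff₀ h1t]; linarith
    have h2 : (0:ℝ) < ρ₀ ^ (2*α) := Real.rpow_pos_of_pos hρ₀ _
    nlinarith
  -- pointwise bound on the ball
  have hpt : ∀ ξ ∈ ball (0 : EuclideanSpace ℝ (Fin n)) ρ,
      K * ‖v₀hat ξ‖ ^ 2 ≤ ‖Fhat t ξ‖ ^ 2 := by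
    intro ξ hξ
    have hξρ : ‖ξ‖ < ρ := by simpa using mem_ball_iff_norm.mp hξ
    have hbase : ‖ξ‖ ^ (2*α) ≤ ρ ^ (2*α) :=
      Real.rpow_le_rpow (norm_nonneg _) hξρ.le h2α.le
    have hexp1 : -(c * ρ₀ ^ (2*α)) ≤ -c * ‖ξ‖ ^ (2*α) * t := by
      have : ‖ξ‖ ^ (2*α) * t ≤ ρ₀ ^ (2*α) := by
        calc ‖ξ‖ ^ (2*α) * t ≤ ρ ^ (2*α) * t := by nlinarith
        _ ≤ ρ₀ ^ (2*α) := hρ2α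
      nlinarith
    have hexp2 : Real.exp (-(c * ρ₀ ^ (2*α))) ≤ Real.exp (-c * ‖ξ‖ ^ (2*α) * t) :=
      Real.exp_le_exp.mpr hexp1
    have h1 : C * Real.exp (-(c * ρ₀ ^ (2*α))) * ‖v₀hat ξ‖ ≤ ‖Fhat t ξ‖ := by
      calc C * Real.exp (-(c * ρ₀ ^ (2*α))) * ‖v₀hat ξ‖
          ≤ C * Real.exp (-c * ‖ξ‖ ^ (2*α) * t) * ‖v₀hat ξ‖ := by
            gcongr
        _ ≤ ‖Fhat t ξ‖ := hsg t ht ξ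
    have h0 : 0 ≤ C * Real.exp (-(c * ρ₀ ^ (2*α))) * ‖v₀hat ξ‖ := by positivity
    calc K * ‖v₀hat ξ‖ ^ 2 = (C * Real.exp (-(c * ρ₀ ^ (2*α))) * ‖v₀hat ξ‖) ^ 2 := by ring
      _ ≤ ‖Fhat t ξ‖ ^ 2 := by nlinarith [norm_nonneg (Fhat t ξ)]
  -- lower bound for the ball integral of v₀hat
  have hI : C₁ * ρ ^ (2*r + n) ≤
      ∫ ξ in ball (0 : EuclideanSpace ℝ (Fin n)) ρ, ‖v₀hat ξ‖ ^ 2 := by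
    have h := hlow ρ hρpos hρle
    have hρpow : (0:ℝ) < ρ ^ (2*r + n) := Real.rpow_pos_of_pos hρpos _
    have hinv : ρ ^ (-2*r - (n:ℝ)) = (ρ ^ (2*r + n))⁻¹ := by
      rw [← Real.rpow_neg hρpos.le]; ring_nf
    rw [hinv] at h
    have h2 := mul_le_mul_of_nonneg_right h hρpow.le
    rwa [mul_right_comm, inv_mul_cancel₀ hρpow.ne', one_mul] at h2
  -- put everything together
  have hmono : K * ∫ ξ in ball (0 : EuclideanSpace ℝ (Fin n)) ρ, ‖v₀hat ξ‖ ^ 2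
      ≤ ∫ ξ in ball (0 : EuclideanSpace ℝ (Fin n)) ρ, ‖Fhat t ξ‖ ^ 2 := by
    rw [← smul_eq_mul, ← integral_smul]
    refine setIntegral_mono_on ?_ ((hL2 t ht).integrableOn) measurableSet_ball ?_
    · exact (hv₀int.smul K).integrableOn
    · intro ξ hξ
      simpa [smul_eq_mul] using hpt ξ hξ
  have hball_le : ∫ ξ in ball (0 : EuclideanSpace ℝ (Fin n)) ρ, ‖Fhat t ξ‖ ^ 2
      ≤ ∫ ξ, ‖Fhat t ξ‖ ^ 2 :=
    setIntegral_le_integral (hL2 t ht) (Filter.Eventually.of_forall fun ξ => by positivity)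
  have hρpow : ρ ^ (2*r + n) = ρ₀ ^ (2*r + n) * (1 + t) ^ (-((n:ℝ)/2 + r)/α) := by
    rw [hρdef, Real.mul_rpow hρ₀.le hspos.le, hs, ← Real.rpow_mul h1t.le]
    congr 2
    field_simp
    ring
  calc K * C₁ * ρ₀ ^ (2*r + n) * (1 + t) ^ (-((n:ℝ)/2 + r)/α)
      = K * (C₁ * ρ ^ (2*r + n)) := by rw [hρpow]; ring
    _ ≤ K * ∫ ξ in ball (0 : EuclideanSpace ℝ (Fin n)) ρ, ‖v₀hat ξ‖ ^ 2 := by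
        exact mul_le_mul_of_nonneg_left hI hKpos.le
    _ ≤ ∫ ξ in ball (0 : EuclideanSpace ℝ (Fin n)) ρ, ‖Fhat t ξ‖ ^ 2 := hmono
    _ ≤ ∫ ξ, ‖Fhat t ξ‖ ^ 2 := hball_le
end

section
/- Upper bound for linear decay via Fourier splitting: let v : [0,∞) → L²(ℝⁿ) satisfy d/dt ‖v(t)‖²_{L²} ≤ -C ∫ |ξ|^{2α}|v̂(ξ,t)|² dξ and |v̂(ξ,t)| ≤ C |v̂₀(ξ)| for ξ in small balls, and suppose ρ^{-2r-n} ∫_{B(ρ)}|v̂₀|² dξ ≤ C₀ for all 0 < ρ ≤ ρ₀ (i.e., P_r(v₀) < ∞). Then with ρ(t) = m^{1/(2α)}(1+t)^{-1/(2α)} and m > r + n/2, one obtains ‖v(t)‖²_{L²} ≤ C (1+t)^{-(n/2 + r)/α}. -/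
open MeasureTheory Filter Metric
open scoped Topology

set_option maxHeartbeats 1000000 in
/-- Upper bound for linear decay via Fourier splitting. Suppose the energy
`E t = ∫ |v̂(ξ,t)|² dξ` (`= ‖v(t)‖²_{L²}` by Plancherel) satisfies
`E'(t) ≤ -C ∫ |ξ|^{2α}|v̂(ξ,t)|² dξ`, that `|v̂(ξ,t)| ≤ C|v̂₀(ξ)|`, and that
`ρ^{-2r-n} ∫_{B(ρ)} |v̂₀|² dξ ≤ C₀` for `0 < ρ ≤ ρ₀` (i.e. `P_r(v₀) < ∞`). Then
`E t ≤ C'(1+t)^{-(n/2+r)/α}` for some `C' > 0` and all `t ≥ 0`. -/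
theorem linear_decay_upper_bound_fourier_splitting
    (n : ℕ) (α C C₀ r ρ₀ : ℝ) (hα : 0 < α) (hα1 : α ≤ 1) (hC : 0 < C) (hC₀ : 0 < C₀)
    (hρ₀ : 0 < ρ₀) (hr : -(n : ℝ) / 2 < r)
    (v₀hat : EuclideanSpace ℝ (Fin n) → EuclideanSpace ℝ (Fin n))
    (hv₀ : MemLp v₀hat 2)
    (Fhat : ℝ → EuclideanSpace ℝ (Fin n) → EuclideanSpace ℝ (Fin n))
    (hL2 : ∀ t : ℝ, 0 ≤ t → Integrable (fun ξ : EuclideanSpace ℝ (Fin n) => ‖Fhat t ξ‖ ^ 2))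
    (hdiss : ∀ t : ℝ, 0 ≤ t →
      Integrable (fun ξ : EuclideanSpace ℝ (Fin n) => ‖ξ‖ ^ (2 * α) * ‖Fhat t ξ‖ ^ 2))
    (E' : ℝ → ℝ)
    (hE : ∀ t : ℝ, 0 ≤ t → HasDerivAt (fun τ => ∫ ξ, ‖Fhat τ ξ‖ ^ 2) (E' t) t)
    (hE' : ∀ t : ℝ, 0 ≤ t →
      E' t ≤ -C * ∫ ξ, ‖ξ‖ ^ (2 * α) * ‖Fhat t ξ‖ ^ 2)
    (hpt : ∀ t : ℝ, 0 ≤ t → ∀ ξ : EuclideanSpace ℝ (Fin n), ‖Fhat t ξ‖ ≤ C * ‖v₀hat ξ‖)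
    (hP : ∀ ρ : ℝ, 0 < ρ → ρ ≤ ρ₀ →
      ρ ^ (-2 * r - n) *
          (∫ ξ in ball (0 : EuclideanSpace ℝ (Fin n)) ρ, ‖v₀hat ξ‖ ^ 2) ≤ C₀) :
    ∃ C' : ℝ, 0 < C' ∧ ∀ t : ℝ, 0 ≤ t →
      (∫ ξ, ‖Fhat t ξ‖ ^ 2) ≤ C' * (1 + t) ^ (-((n : ℝ) / 2 + r) / α) := by
  have hβpos : 0 < ((n : ℝ) / 2 + r) / α := by
    apply div_pos (by linarith) hα
  set β : ℝ := ((n : ℝ) / 2 + r) / α with hβdef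
  set m : ℝ := β + 1 with hmdef
  have hm : 0 < m := by linarith
  have hm1 : (1 : ℝ) ≤ m := by linarith
  set T : ℝ := max 1 (m / (C * ρ₀ ^ (2 * α))) with hTdef
  have hT1 : (1 : ℝ) ≤ T := le_max_left _ _
  have hmC : (0 : ℝ) < m / C := div_pos hm hC
  set K : ℝ := m * C ^ 2 * C₀ * (m / C) ^ β with hKdef
  have hKpos : 0 < K :=
    mul_pos (mul_pos (mul_pos hm (pow_pos hC 2)) hC₀) (Real.rpow_pos_of_pos hmC β)
  -- integrability of ‖v₀hat‖²
  have hv2int : Integrable (fun ξ : EuclideanSpace ℝ (Fin n) => ‖v₀hat ξ‖ ^ 2) := by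
    have h := hv₀.integrable_norm_rpow two_ne_zero ENNReal.ofNat_ne_top
    have h2 : (2 : ENNReal).toReal = (2 : ℝ) := by simp
    refine h.congr ?_
    filter_upwards with ξ
    rw [h2, Real.rpow_two]
  have hEnonneg : ∀ t : ℝ, 0 ≤ ∫ ξ, ‖Fhat t ξ‖ ^ 2 := fun t =>
    integral_nonneg fun ξ => by positivity
  -- KEY differential inequality
  have key : ∀ t : ℝ, 0 ≤ t →
      m * (T + t) ^ (m - 1) * (∫ ξ, ‖Fhat t ξ‖ ^ 2) + (T + t) ^ m * E' t ≤ K := by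
    intro t ht
    have hTt : (0 : ℝ) < T + t := by linarith
    have hE't := hE' t ht
    have hL2t := hL2 t ht
    have hdisst := hdiss t ht
    set Etot : ℝ := ∫ ξ, ‖Fhat t ξ‖ ^ 2 with hEtot
    set D : ℝ := ∫ ξ, ‖ξ‖ ^ (2 * α) * ‖Fhat t ξ‖ ^ 2 with hD
    have hEtotnn : 0 ≤ Etot := hEnonneg t
    set ρ : ℝ := (m / (C * (T + t))) ^ (1 / (2 * α)) with hρdef
    have hbase : 0 < m / (C * (T + t)) := by positivity
    have hρpos : 0 < ρ := Real.rpow_pos_of_pos hbase _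
    have hρ2α : ρ ^ (2 * α) = m / (C * (T + t)) := by
      rw [hρdef, ← Real.rpow_mul hbase.le, one_div, inv_mul_cancel₀ (by positivity),
        Real.rpow_one]
    have hρle : ρ ≤ ρ₀ := by
      have hT2 : m / (C * ρ₀ ^ (2 * α)) ≤ T + t := le_trans (le_max_right _ _) (by linarith)
      have hb2 : m / (C * (T + t)) ≤ ρ₀ ^ (2 * α) := by
        rw [div_le_iff₀ (by positivity)]
        rw [div_le_iff₀ (by positivity)] at hT2
        nlinarith [Real.rpow_pos_of_pos hρ₀ (2 * α)]
      calc ρ ≤ (ρ₀ ^ (2 * α)) ^ (1 / (2 * α)) :=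
            Real.rpow_le_rpow hbase.le hb2 (by positivity)
        _ = ρ₀ := by
            rw [← Real.rpow_mul hρ₀.le, mul_one_div, div_self (by positivity), Real.rpow_one]
    set IB : ℝ := ∫ ξ in ball (0 : EuclideanSpace ℝ (Fin n)) ρ, ‖Fhat t ξ‖ ^ 2 with hIB
    -- ball bound for v₀hat
    have hIv : (∫ ξ in ball (0 : EuclideanSpace ℝ (Fin n)) ρ, ‖v₀hat ξ‖ ^ 2)
        ≤ C₀ * ρ ^ (2 * r + (n : ℝ)) := by
      have h := hP ρ hρpos hρle
      have hpow : ρ ^ (-2 * r - (n : ℝ)) * ρ ^ (2 * r + (n : ℝ)) = 1 := by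
        rw [← Real.rpow_add hρpos]
        norm_num
      have h2 := mul_le_mul_of_nonneg_right h
        (Real.rpow_nonneg hρpos.le (2 * r + (n : ℝ)))
      calc (∫ ξ in ball (0 : EuclideanSpace ℝ (Fin n)) ρ, ‖v₀hat ξ‖ ^ 2)
          = ρ ^ (-2 * r - (n : ℝ)) *
              (∫ ξ in ball (0 : EuclideanSpace ℝ (Fin n)) ρ, ‖v₀hat ξ‖ ^ 2) *
              ρ ^ (2 * r + (n : ℝ)) := by
            rw [mul_right_comm, hpow, one_mul]
        _ ≤ C₀ * ρ ^ (2 * r + (n : ℝ)) := h2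
    -- ball bound for Fhat
    have hIF : IB ≤ C ^ 2 * (C₀ * ρ ^ (2 * r + (n : ℝ))) := by
      have h1 : IB ≤ ∫ ξ in ball (0 : EuclideanSpace ℝ (Fin n)) ρ, C ^ 2 * ‖v₀hat ξ‖ ^ 2 := by
        rw [hIB]
        refine setIntegral_mono_on hL2t.integrableOn
          ((hv2int.const_mul (C ^ 2)).integrableOn) measurableSet_ball ?_
        intro ξ _
        have h := hpt t ht ξ
        nlinarith [norm_nonneg (Fhat t ξ), norm_nonneg (v₀hat ξ)]
      rw [integral_const_mul] at h1
      calc IB ≤ C ^ 2 * ∫ ξ in ball (0 : EuclideanSpace ℝ (Fin n)) ρ, ‖v₀hat ξ‖ ^ 2 := h1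
        _ ≤ C ^ 2 * (C₀ * ρ ^ (2 * r + (n : ℝ))) :=
            mul_le_mul_of_nonneg_left hIv (by positivity)
    -- Fourier splitting of the dissipation integral
    have hsplit : ρ ^ (2 * α) * (Etot - IB) ≤ D := by
      have hcompl : (∫ ξ in (ball (0 : EuclideanSpace ℝ (Fin n)) ρ)ᶜ, ‖Fhat t ξ‖ ^ 2)
          = Etot - IB := by
        have h := integral_add_compl
          (s := ball (0 : EuclideanSpace ℝ (Fin n)) ρ) measurableSet_ball hL2t
        rw [hEtot, hIB]
        linarith
      rw [← hcompl, ← integral_const_mul, hD]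
      calc (∫ ξ in (ball (0 : EuclideanSpace ℝ (Fin n)) ρ)ᶜ, ρ ^ (2 * α) * ‖Fhat t ξ‖ ^ 2)
          ≤ ∫ ξ in (ball (0 : EuclideanSpace ℝ (Fin n)) ρ)ᶜ,
              ‖ξ‖ ^ (2 * α) * ‖Fhat t ξ‖ ^ 2 := by
            refine setIntegral_mono_on (hL2t.const_mul _).integrableOn
              hdisst.integrableOn measurableSet_ball.compl ?_
            intro ξ hξ
            have hξρ : ρ ≤ ‖ξ‖ := by
              simp only [Set.mem_compl_iff, mem_ball, dist_zero_right, not_lt] at hξ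
              exact hξ
            have h := Real.rpow_le_rpow hρpos.le hξρ (by positivity : (0:ℝ) ≤ 2 * α)
            have hF : (0 : ℝ) ≤ ‖Fhat t ξ‖ ^ 2 := by positivity
            exact mul_le_mul_of_nonneg_right h hF
        _ ≤ ∫ ξ, ‖ξ‖ ^ (2 * α) * ‖Fhat t ξ‖ ^ 2 :=
            setIntegral_le_integral hdisst (ae_of_all _ fun ξ => by positivity)
    -- E' bound
    have hCρ : C * ρ ^ (2 * α) = m / (T + t) := by
      rw [hρ2α, mul_div_assoc', mul_div_mul_left _ _ hC.ne']
    have hE'le : E' t ≤ -(m / (T + t)) * (Etot - IB) := by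
      have h2 := mul_le_mul_of_nonneg_left hsplit hC.le
      have h3 : C * (ρ ^ (2 * α) * (Etot - IB)) = m / (T + t) * (Etot - IB) := by
        rw [← mul_assoc, hCρ]
      linarith
    -- powers of (T+t)
    have hTm : (T + t) ^ (m - 1) * (T + t) = (T + t) ^ m := by
      rw [← Real.rpow_add_one hTt.ne', sub_add_cancel]
    have hPpos : 0 < (T + t) ^ (m - 1) := Real.rpow_pos_of_pos hTt _
    have hQpos : 0 < (T + t) ^ m := Real.rpow_pos_of_pos hTt _
    -- the crucial cancellation: (T+t)^(m-1) * ρ^(2r+n) = (m/C)^β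
    have hPρ : (T + t) ^ (m - 1) * ρ ^ (2 * r + (n : ℝ)) = (m / C) ^ β := by
      have hexp : 1 / (2 * α) * (2 * r + (n : ℝ)) = β := by
        rw [hβdef]; field_simp; ring
      have hsplitb : m / (C * (T + t)) = (m / C) / (T + t) := by
        field_simp
      have hm1β : m - 1 = β := by rw [hmdef]; ring
      rw [hρdef, ← Real.rpow_mul hbase.le, hexp, hsplitb,
        Real.div_rpow hmC.le hTt.le, hm1β]
      rw [← mul_div_assoc, mul_comm, mul_div_assoc,
        div_self (Real.rpow_pos_of_pos hTt β).ne', mul_one]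
    -- combine
    have h5 : (T + t) ^ m * E' t ≤ (T + t) ^ m * (-(m / (T + t)) * (Etot - IB)) :=
      mul_le_mul_of_nonneg_left hE'le hQpos.le
    have h6 : (T + t) ^ m * (-(m / (T + t)) * (Etot - IB))
        = -(m * (T + t) ^ (m - 1) * Etot) + m * (T + t) ^ (m - 1) * IB := by
      rw [← hTm]; field_simp; ring
    have h7 : m * (T + t) ^ (m - 1) * IB ≤ K := by
      have h8 : m * (T + t) ^ (m - 1) * IB
          ≤ m * (T + t) ^ (m - 1) * (C ^ 2 * (C₀ * ρ ^ (2 * r + (n : ℝ)))) :=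
        mul_le_mul_of_nonneg_left hIF (by positivity)
      have h9 : m * (T + t) ^ (m - 1) * (C ^ 2 * (C₀ * ρ ^ (2 * r + (n : ℝ)))) = K := by
        rw [hKdef, ← hPρ]; ring
      linarith
    rw [h6] at h5
    linarith
  -- integrate: define φ and show it is monotone on [0,∞)
  have hg : ∀ t : ℝ, 0 ≤ t → HasDerivAt (fun τ => (T + τ) ^ m * ∫ ξ, ‖Fhat τ ξ‖ ^ 2)
      (m * (T + t) ^ (m - 1) * (∫ ξ, ‖Fhat t ξ‖ ^ 2) + (T + t) ^ m * E' t) t := by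
    intro t ht
    have hTt : (0 : ℝ) < T + t := by linarith
    have h1 : HasDerivAt (fun τ : ℝ => T + τ) 1 t := (hasDerivAt_id t).const_add T
    have h2 : HasDerivAt (fun τ : ℝ => (T + τ) ^ m) (m * (T + t) ^ (m - 1)) t := by
      have h3 := (Real.hasDerivAt_rpow_const (x := T + t) (p := m)
        (Or.inl hTt.ne')).comp t h1
      simpa [Function.comp_def] using h3
    exact h2.mul (hE t ht)
  set φ : ℝ → ℝ := fun t => T ^ m * (∫ ξ, ‖Fhat 0 ξ‖ ^ 2) + K * t -
      (T + t) ^ m * ∫ ξ, ‖Fhat t ξ‖ ^ 2 with hφdef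
  have hφd : ∀ t : ℝ, 0 ≤ t → HasDerivAt φ
      (K - (m * (T + t) ^ (m - 1) * (∫ ξ, ‖Fhat t ξ‖ ^ 2) + (T + t) ^ m * E' t)) t := by
    intro t ht
    have h := ((hasDerivAt_const t (T ^ m * (∫ ξ, ‖Fhat 0 ξ‖ ^ 2))).add
      ((hasDerivAt_id t).const_mul K)).sub (hg t ht)
    refine h.congr_deriv ?_
    ring
  have hmono : MonotoneOn φ (Set.Ici (0 : ℝ)) := by
    apply monotoneOn_of_deriv_nonneg (convex_Ici 0)
    · intro t ht
      exact (hφd t ht).continuousAt.continuousWithinAt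
    · intro t ht
      rw [interior_Ici] at ht
      exact (hφd t (le_of_lt ht)).differentiableAt.differentiableWithinAt
    · intro t ht
      rw [interior_Ici] at ht
      rw [(hφd t ht.le).deriv]
      linarith [key t ht.le]
  have hφ0 : φ 0 = 0 := by
    simp [hφdef]
  have hgrow : ∀ t : ℝ, 0 ≤ t →
      (T + t) ^ m * (∫ ξ, ‖Fhat t ξ‖ ^ 2)
        ≤ T ^ m * (∫ ξ, ‖Fhat 0 ξ‖ ^ 2) + K * t := by
    intro t ht
    have h := hmono (Set.self_mem_Ici) (Set.mem_Ici.mpr ht) ht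
    rw [hφ0] at h
    simp only [hφdef] at h
    linarith
  -- conclude
  refine ⟨T ^ m * (∫ ξ, ‖Fhat 0 ξ‖ ^ 2) + K, ?_, ?_⟩
  · have := hEnonneg 0
    have hTm0 : (0 : ℝ) < T ^ m := Real.rpow_pos_of_pos (by linarith) m
    nlinarith
  · intro t ht
    set C' : ℝ := T ^ m * (∫ ξ, ‖Fhat 0 ξ‖ ^ 2) + K with hC'def
    have hC'nn : 0 ≤ C' := by
      have := hEnonneg 0
      have hTm0 : (0 : ℝ) < T ^ m := Real.rpow_pos_of_pos (by linarith) m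
      nlinarith
    have hTt : (0 : ℝ) < T + t := by linarith
    have hQpos : 0 < (T + t) ^ m := Real.rpow_pos_of_pos hTt m
    have h1 : (T + t) ^ m * (∫ ξ, ‖Fhat t ξ‖ ^ 2) ≤ C' * (T + t) := by
      have h2 := hgrow t ht
      have hE0 := hEnonneg 0
      have hTm0 : (0 : ℝ) < T ^ m := Real.rpow_pos_of_pos (by linarith) m
      have h3 : T ^ m * (∫ ξ, ‖Fhat 0 ξ‖ ^ 2) + K * t ≤ C' * (T + t) := by
        rw [hC'def]
        nlinarith [mul_nonneg (mul_nonneg hTm0.le hE0) (show (0:ℝ) ≤ T + t - 1 by linarith),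
          mul_nonneg hKpos.le (show (0:ℝ) ≤ T by linarith)]
      linarith
    have h4 : (∫ ξ, ‖Fhat t ξ‖ ^ 2) ≤ C' * (T + t) ^ (1 - m) := by
      calc (∫ ξ, ‖Fhat t ξ‖ ^ 2) ≤ C' * (T + t) / (T + t) ^ m := by
            rw [le_div_iff₀ hQpos]; linarith [h1]
        _ = C' * ((T + t) / (T + t) ^ m) := by ring
        _ = C' * (T + t) ^ (1 - m) := by
            rw [Real.rpow_sub hTt, Real.rpow_one]
    have h5 : (T + t) ^ (1 - m) ≤ (1 + t) ^ (1 - m) := by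
      apply Real.rpow_le_rpow_of_nonpos (by linarith) (by linarith)
      linarith
    have h6 : (1 : ℝ) - m = -((n : ℝ) / 2 + r) / α := by
      rw [hmdef, hβdef]; field_simp; ring
    calc (∫ ξ, ‖Fhat t ξ‖ ^ 2) ≤ C' * (T + t) ^ (1 - m) := h4
      _ ≤ C' * (1 + t) ^ (1 - m) := mul_le_mul_of_nonneg_left h5 hC'nn
      _ = C' * (1 + t) ^ (-((n : ℝ) / 2 + r) / α) := by rw [h6]
end

section
/- Low-frequency bound for the compressible model's Duhamel term: let G(ξ,s) satisfy |G(ξ,s)| ≤ C|ξ| ‖u(s)‖²_{L²} and suppose ‖u(s)‖²_{L²} ≤ C(1+s)^{-β} with 0 ≤ β < 1, and |e^{(t-s)M(ξ)}| ≤ e^{-c(t-s)|ξ|²}. Then ∫_{B(g(t))} |∫₀ᵗ e^{(t-s)M(ξ)} G(ξ,s) ds|² dξ ≤ C g(t)⁵ (1+t)^{2(1-β)} in ℝ³; with g(t)² = a/(1+t) this is ≤ C(1+t)^{-(1/2 + 2β)}. -/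
open MeasureTheory Metric intervalIntegral

/-- Low-frequency bound for the compressible model's Duhamel term in `ℝ³`.
If the Duhamel term `D(ξ,t) = ∫₀ᵗ e^{(t-s)M(ξ)} G(ξ,s) ds` satisfies
`|D(ξ,t)| ≤ ∫₀ᵗ e^{-c(t-s)|ξ|²} C|ξ| u2(s) ds` (from `|G(ξ,s)| ≤ C|ξ|‖u(s)‖²_{L²}` and
`|e^{(t-s)M(ξ)}| ≤ e^{-c(t-s)|ξ|²}`), where `u2(s) = ‖u(s)‖²_{L²} ≤ C(1+s)^{-β}` with
`0 ≤ β < 1`, then `∫_{B(g(t))} |D(ξ,t)|² dξ ≤ C' g(t)⁵ (1+t)^{2(1-β)}`; with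
`g(t)² = a/(1+t)` this is `≤ C''(1+t)^{-(1/2+2β)}`. -/
theorem compressible_duhamel_low_frequency_bound
    (β c C : ℝ) (hβ0 : 0 ≤ β) (hβ1 : β < 1) (hc : 0 < c) (hC : 0 < C)
    (u2 : ℝ → ℝ) (hu2cont : Continuous u2) (hu2nonneg : ∀ s : ℝ, 0 ≤ s → 0 ≤ u2 s)
    (hu2 : ∀ s : ℝ, 0 ≤ s → u2 s ≤ C * (1 + s) ^ (-β))
    (D : EuclideanSpace ℝ (Fin 3) → ℝ → EuclideanSpace ℝ (Fin 3))
    (hD : ∀ (ξ : EuclideanSpace ℝ (Fin 3)) (t : ℝ), 0 ≤ t →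
      ‖D ξ t‖ ≤ ∫ s in (0 : ℝ)..t, Real.exp (-c * (t - s) * ‖ξ‖ ^ 2) * (C * ‖ξ‖ * u2 s)) :
    ∃ C' : ℝ, 0 < C' ∧
      (∀ t : ℝ, 0 ≤ t → ∀ g : ℝ, 0 < g →
        (∫ ξ in ball (0 : EuclideanSpace ℝ (Fin 3)) g, ‖D ξ t‖ ^ 2)
          ≤ C' * g ^ (5 : ℝ) * (1 + t) ^ (2 * (1 - β))) ∧
      (∀ a : ℝ, 0 < a → ∃ C'' : ℝ, 0 < C'' ∧ ∀ t : ℝ, 0 ≤ t →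
        (∫ ξ in ball (0 : EuclideanSpace ℝ (Fin 3)) (Real.sqrt (a / (1 + t))), ‖D ξ t‖ ^ 2)
          ≤ C'' * (1 + t) ^ (-(1 / 2 + 2 * β))) := by
  set K : ℝ := C ^ 2 / (1 - β) with hKdef
  have hβ1' : (0:ℝ) < 1 - β := by linarith
  have hK0 : 0 < K := div_pos (pow_pos hC 2) hβ1'
  -- pointwise bound on ‖D ξ t‖
  have hpt : ∀ (ξ : EuclideanSpace ℝ (Fin 3)) (t : ℝ), 0 ≤ t →
      ‖D ξ t‖ ≤ K * ‖ξ‖ * (1 + t) ^ (1 - β) := by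
    intro ξ t ht
    have h1t : (0:ℝ) < 1 + t := by linarith
    have hf : IntervalIntegrable
        (fun s => Real.exp (-c * (t - s) * ‖ξ‖ ^ 2) * (C * ‖ξ‖ * u2 s)) volume 0 t := by
      apply Continuous.intervalIntegrable
      exact (Real.continuous_exp.comp (by fun_prop)).mul (by fun_prop)
    have hg : IntervalIntegrable (fun s => C * ‖ξ‖ * (C * (1 + s) ^ (-β))) volume 0 t := by
      apply ContinuousOn.intervalIntegrable
      rw [Set.uIcc_of_le ht]
      apply continuousOn_of_forall_continuousAt
      intro s hs
      have hs0 : (0:ℝ) < 1 + s := by have := hs.1; linarith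
      exact continuousAt_const.mul (continuousAt_const.mul
        ((Real.continuousAt_rpow_const _ _ (Or.inl hs0.ne')).comp (by fun_prop)))
    have h2 : (∫ s in (0:ℝ)..t, Real.exp (-c * (t - s) * ‖ξ‖ ^ 2) * (C * ‖ξ‖ * u2 s))
        ≤ ∫ s in (0:ℝ)..t, C * ‖ξ‖ * (C * (1 + s) ^ (-β)) := by
      apply intervalIntegral.integral_mono_on ht hf hg
      intro s hs
      have hexp : Real.exp (-c * (t - s) * ‖ξ‖ ^ 2) ≤ 1 := by
        rw [Real.exp_le_one_iff]
        have h1 : 0 ≤ c * (t - s) * ‖ξ‖ ^ 2 :=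
          mul_nonneg (mul_nonneg hc.le (by linarith [hs.2])) (sq_nonneg _)
        nlinarith
      have hCξ : 0 ≤ C * ‖ξ‖ := mul_nonneg hC.le (norm_nonneg _)
      calc Real.exp (-c * (t - s) * ‖ξ‖ ^ 2) * (C * ‖ξ‖ * u2 s)
          ≤ 1 * (C * ‖ξ‖ * u2 s) := by
            apply mul_le_mul_of_nonneg_right hexp
            exact mul_nonneg hCξ (hu2nonneg s hs.1)
        _ = C * ‖ξ‖ * u2 s := one_mul _
        _ ≤ C * ‖ξ‖ * (C * (1 + s) ^ (-β)) :=
            mul_le_mul_of_nonneg_left (hu2 s hs.1) hCξ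
    have h3 : (∫ s in (0:ℝ)..t, C * ‖ξ‖ * (C * (1 + s) ^ (-β)))
        = (C * ‖ξ‖ * C) * ∫ s in (0:ℝ)..t, (1 + s) ^ (-β) := by
      rw [← intervalIntegral.integral_const_mul]
      congr 1; funext s; ring
    have h4 : (∫ s in (0:ℝ)..t, (1 + s) ^ (-β)) ≤ (1 + t) ^ (1 - β) / (1 - β) := by
      have hI : (∫ s in (0:ℝ)..t, (1 + s) ^ (-β))
          = ((1 + t) ^ (1 - β) - 1) / (1 - β) := by
        have hcomp := intervalIntegral.integral_comp_add_left
          (a := (0:ℝ)) (b := t) (fun x => x ^ (-β)) 1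
        rw [show (fun s : ℝ => (1 + s) ^ (-β)) = (fun s : ℝ => (fun x : ℝ => x ^ (-β)) (1 + s))
          from rfl, hcomp, integral_rpow (Or.inl (by linarith)), add_zero,
          show -β + 1 = 1 - β by ring, Real.one_rpow]
      rw [hI]
      apply (div_le_div_iff_of_pos_right hβ1').2
      linarith
    calc ‖D ξ t‖
        ≤ ∫ s in (0:ℝ)..t, Real.exp (-c * (t - s) * ‖ξ‖ ^ 2) * (C * ‖ξ‖ * u2 s) := hD ξ t ht
      _ ≤ (C * ‖ξ‖ * C) * ∫ s in (0:ℝ)..t, (1 + s) ^ (-β) := h2.trans_eq h3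
      _ ≤ (C * ‖ξ‖ * C) * ((1 + t) ^ (1 - β) / (1 - β)) := by
          apply mul_le_mul_of_nonneg_left h4
          positivity
      _ = K * ‖ξ‖ * (1 + t) ^ (1 - β) := by rw [hKdef]; ring
  -- volume of the unit ball
  set vB : ℝ := (volume (ball (0:EuclideanSpace ℝ (Fin 3)) 1)).toReal with hvBdef
  have hvB0 : 0 < vB := ENNReal.toReal_pos
    (measure_ball_pos volume (0:EuclideanSpace ℝ (Fin 3)) one_pos).ne' measure_ball_lt_top.ne
  -- main estimate
  have main : ∀ t : ℝ, 0 ≤ t → ∀ g : ℝ, 0 < g →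
      (∫ ξ in ball (0 : EuclideanSpace ℝ (Fin 3)) g, ‖D ξ t‖ ^ 2)
        ≤ (K ^ 2 * vB) * g ^ (5 : ℝ) * (1 + t) ^ (2 * (1 - β)) := by
    intro t ht g hg
    have h1t : (0:ℝ) < 1 + t := by linarith
    set M : ℝ := (K * g * (1 + t) ^ (1 - β)) ^ 2 with hMdef
    have hball : (∫ ξ in ball (0:EuclideanSpace ℝ (Fin 3)) g, ‖D ξ t‖ ^ 2)
        ≤ ∫ _ξ in ball (0:EuclideanSpace ℝ (Fin 3)) g, M := by
      apply integral_mono_of_nonneg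
      · exact Filter.Eventually.of_forall fun ξ => by positivity
      · exact integrableOn_const measure_ball_lt_top.ne
      · rw [Filter.EventuallyLE, ae_restrict_iff' measurableSet_ball]
        apply Filter.Eventually.of_forall
        intro ξ hξ
        have hξg : ‖ξ‖ ≤ g := le_of_lt (mem_ball_zero_iff.mp hξ)
        have hb : ‖D ξ t‖ ≤ K * g * (1 + t) ^ (1 - β) := by
          refine (hpt ξ t ht).trans ?_
          have h' : K * ‖ξ‖ ≤ K * g := mul_le_mul_of_nonneg_left hξg hK0.le
          exact mul_le_mul_of_nonneg_right h' (by positivity)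
        exact pow_le_pow_left₀ (norm_nonneg _) hb 2
    have hvol : (volume (ball (0:EuclideanSpace ℝ (Fin 3)) g)).toReal = g ^ 3 * vB := by
      rw [Measure.addHaar_ball volume (0:EuclideanSpace ℝ (Fin 3)) hg.le, ENNReal.toReal_mul,
        ENNReal.toReal_ofReal (by positivity), hvBdef]
      congr 2
      simp [finrank_euclideanSpace]
    rw [setIntegral_const, smul_eq_mul, measureReal_def, hvol] at hball
    refine hball.trans_eq ?_
    have hrp : ((1 + t) ^ (1 - β)) ^ 2 = (1 + t) ^ (2 * (1 - β)) := by
      rw [mul_comm 2 (1 - β), Real.rpow_mul h1t.le, Real.rpow_two]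
    have hg5 : g ^ (5:ℝ) = g ^ (5:ℕ) := by
      rw [← Real.rpow_natCast g 5]; norm_num
    rw [hg5]
    calc g ^ 3 * vB * M = K ^ 2 * vB * g ^ (5:ℕ) * (((1 + t) ^ (1 - β)) ^ 2) := by
          rw [hMdef]; ring
      _ = K ^ 2 * vB * g ^ (5:ℕ) * (1 + t) ^ (2 * (1 - β)) := by rw [hrp]
  refine ⟨K ^ 2 * vB, by positivity, main, ?_⟩
  -- specialization g = sqrt (a / (1+t))
  intro a ha
  refine ⟨K ^ 2 * vB * a ^ ((5:ℝ)/2), by positivity, ?_⟩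
  intro t ht
  have h1t : (0:ℝ) < 1 + t := by linarith
  have hg : 0 < Real.sqrt (a / (1 + t)) := Real.sqrt_pos.mpr (by positivity)
  refine (main t ht _ hg).trans_eq ?_
  have h5 : (Real.sqrt (a / (1 + t))) ^ (5:ℝ)
      = a ^ ((5:ℝ)/2) * (1 + t) ^ (-((5:ℝ)/2)) := by
    have hx : (0:ℝ) ≤ a / (1 + t) := by positivity
    rw [Real.sqrt_eq_rpow, ← Real.rpow_mul hx, show (1/2) * (5:ℝ) = (5:ℝ)/2 by norm_num,
      Real.div_rpow ha.le h1t.le, div_eq_mul_inv, ← Real.rpow_neg h1t.le]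
  rw [h5]
  rw [show K ^ 2 * vB * (a ^ ((5:ℝ)/2) * (1 + t) ^ (-((5:ℝ)/2))) * (1 + t) ^ (2 * (1 - β))
      = K ^ 2 * vB * a ^ ((5:ℝ)/2) * ((1 + t) ^ (-((5:ℝ)/2)) * (1 + t) ^ (2 * (1 - β)))
    from by ring, ← Real.rpow_add h1t]
  congr 1
  ring
end
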